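/- A finite simple graph without isolated vertices that is not complete multipartite contains an induced subgraph isomorphic to one of: 2K₂ (two disjoint edges), P₄ (path on four vertices), or the paw (a triangle with a pendant edge). -/

import Mathlib

def IsCompleteMultipartite {V : Type} (G : SimpleGraph V) : Prop :=
  ∃ s : Setoid V, ∀ u v : V, G.Adj u v ↔ ¬ s.r u v

def twoK2 : SimpleGraph (Fin 4) :=
  SimpleGraph.fromRel (fun a b => (a = 0 ∧ b = 1) ∨ (a = 2 ∧ b = 3))

def pathFour : SimpleGraph (Fin 4) :=
  SimpleGraph.fromRel (fun a b => (a = 0 ∧ b = 1) ∨ (a = 1 ∧ b = 2) ∨ (a = 2 ∧ b = 3))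

def paw : SimpleGraph (Fin 4) :=
  SimpleGraph.fromRel (fun a b =>
    (a = 0 ∧ b = 1) ∨ (a = 1 ∧ b = 2) ∨ (a = 0 ∧ b = 2) ∨ (a = 2 ∧ b = 3))

/-- A finite simple graph without isolated vertices that is not complete multipartite
contains an induced subgraph isomorphic to `2K₂`, `P₄`, or the paw. -/
theorem stmt_0 {V : Type} [Fintype V] (G : SimpleGraph V)
    (hiso : ∀ v : V, ∃ w, G.Adj v w)
    (hncm : ¬ IsCompleteMultipartite G) :
    Nonempty (twoK2 ↪g G) ∨ Nonempty (pathFour ↪g G) ∨ Nonempty (paw ↪g G) := by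
  have key : ∃ x y z : V, G.Adj x z ∧ ¬G.Adj x y ∧ ¬G.Adj y z := by
    by_contra h
    push_neg at h
    exact hncm ⟨⟨fun u v => ¬ G.Adj u v,
      ⟨fun a => G.irrefl, fun {a b} hab h' => hab h'.symm,
       fun {a b c} hab hbc hac => hbc (h a b c hac hab)⟩⟩,
      fun u v => by simp⟩
  obtain ⟨x, y, z, hxz, hxy, hyz⟩ := key
  obtain ⟨w, hyw⟩ := hiso y
  have hxnz : x ≠ z := hxz.ne
  have hynx : y ≠ x := by rintro rfl; exact hyz hxz
  have hynz : y ≠ z := by rintro rfl; exact hxy hxz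
  have hwny : w ≠ y := hyw.ne'
  have hwnx : w ≠ x := by rintro rfl; exact hxy hyw.symm
  have hwnz : w ≠ z := by rintro rfl; exact hyz hyw
  have hyx : ¬G.Adj y x := fun h => hxy h.symm
  have hzy : ¬G.Adj z y := fun h => hyz h.symm
  by_cases hwx : G.Adj w x <;> by_cases hwz : G.Adj w z
  · -- paw: x z w y
    refine Or.inr (Or.inr ⟨⟨⟨![x, z, w, y], ?_⟩, ?_⟩⟩)
    · intro i j hij
      fin_cases i <;> fin_cases j <;> simp_all
    · intro a b
      show G.Adj (![x, z, w, y] a) (![x, z, w, y] b) ↔ paw.Adj a b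
      fin_cases a <;> fin_cases b <;>
        simp [paw, SimpleGraph.fromRel_adj, hxz, hxy, hyz, hyw, hwx, hwz,
          hxz.symm, hyw.symm, hwx.symm, hwz.symm, hxnz, hynx, hynz, hwny, hwnx, hwnz,
          hxnz.symm, hynx.symm, hynz.symm, hwny.symm, hwnx.symm, hwnz.symm,
          G.irrefl, hyx, hzy]
  · -- P4: z x w y
    have hzw : ¬G.Adj z w := fun h => hwz h.symm
    refine Or.inr (Or.inl ⟨⟨⟨![z, x, w, y], ?_⟩, ?_⟩⟩)
    · intro i j hij
      fin_cases i <;> fin_cases j <;> simp_all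
    · intro a b
      show G.Adj (![z, x, w, y] a) (![z, x, w, y] b) ↔ pathFour.Adj a b
      fin_cases a <;> fin_cases b <;>
        simp [pathFour, SimpleGraph.fromRel_adj, hxz, hxy, hyz, hyw, hwx, hwz,
          hxz.symm, hyw.symm, hwx.symm, hxnz, hynx, hynz, hwny, hwnx, hwnz,
          hxnz.symm, hynx.symm, hynz.symm, hwny.symm, hwnx.symm, hwnz.symm,
          G.irrefl, hyx, hzy, hzw]
  · -- P4: x z w y
    have hxw : ¬G.Adj x w := fun h => hwx h.symm
    refine Or.inr (Or.inl ⟨⟨⟨![x, z, w, y], ?_⟩, ?_⟩⟩)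
    · intro i j hij
      fin_cases i <;> fin_cases j <;> simp_all
    · intro a b
      show G.Adj (![x, z, w, y] a) (![x, z, w, y] b) ↔ pathFour.Adj a b
      fin_cases a <;> fin_cases b <;>
        simp [pathFour, SimpleGraph.fromRel_adj, hxz, hxy, hyz, hyw, hwx, hwz,
          hxz.symm, hyw.symm, hwz.symm, hxnz, hynx, hynz, hwny, hwnx, hwnz,
          hxnz.symm, hynx.symm, hynz.symm, hwny.symm, hwnx.symm, hwnz.symm,
          G.irrefl, hyx, hzy, hxw]
  · -- 2K2: x z y w
    have hxw : ¬G.Adj x w := fun h => hwx h.symm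
    have hzw : ¬G.Adj z w := fun h => hwz h.symm
    refine Or.inl ⟨⟨⟨![x, z, y, w], ?_⟩, ?_⟩⟩
    · intro i j hij
      fin_cases i <;> fin_cases j <;> simp_all
    · intro a b
      show G.Adj (![x, z, y, w] a) (![x, z, y, w] b) ↔ twoK2.Adj a b
      fin_cases a <;> fin_cases b <;>
        simp [twoK2, SimpleGraph.fromRel_adj, hxz, hxy, hyz, hyw, hwx, hwz,
          hxz.symm, hyw.symm, hxnz, hynx, hynz, hwny, hwnx, hwnz,
          hxnz.symm, hynx.symm, hynz.symm, hwny.symm, hwnx.symm, hwnz.symm,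
          G.irrefl, hyx, hzy, hxw, hzw]
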